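/- The map H(x) = (h(x), L_f h(x), L_f² h(x)) from ℝ⁴ to ℝ³ has Jacobian of rank 3 at every point x with p_sup − p_L − α·p_lp > 0, T_sup ≠ 0, and (x_v, v) ≠ (0,0) or more generally away from singular points; in particular rank H(x) = 3 < 4, so H is not a diffeomorphism onto its image from ℝ⁴. -/

import Mathlib

set_option maxHeartbeats 1000000 in
/-- The map H(x) = (h, L_f h, L_f² h) : ℝ⁴ → ℝ³ has Jacobian of
rank 3 at every operating point (s > 0, T_sup ≠ 0, x_v ≠ 0); since 3 < 4,
H cannot be injective, hence H is not a diffeomorphism from ℝ⁴. -/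
theorem stmt6 (T_L T_sup α p_lp : ℝ) (hT : T_sup ≠ 0)
    (H : (Fin 4 → ℝ) → (Fin 3 → ℝ))
    (hH : H = fun x => ![x 1,
          T_sup * x 3 * Real.sqrt (x 1 - x 0 - α * p_lp),
          (1/2) * T_sup * (T_sup - T_L) * (x 3)^2
            + T_sup * x 2 * Real.sqrt (x 1 - x 0 - α * p_lp)]) :
    (∀ x : Fin 4 → ℝ, x 1 - x 0 - α * p_lp > 0 → x 3 ≠ 0 →
        LinearMap.rank ((fderiv ℝ H x : (Fin 4 → ℝ) →L[ℝ] (Fin 3 → ℝ)) :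
          (Fin 4 → ℝ) →ₗ[ℝ] (Fin 3 → ℝ)) = 3) ∧
    ¬ Function.Injective H := by
  constructor
  · intro x hs hx3
    set w : ℝ := Real.sqrt (x 1 - x 0 - α * p_lp) with hwdef
    have hw : 0 < w := Real.sqrt_pos.mpr hs
    -- basic projections
    set P : Fin 4 → ((Fin 4 → ℝ) →L[ℝ] ℝ) := fun i => ContinuousLinearMap.proj i with hP
    -- derivative of the inner function g y = y 1 - y 0 - α * p_lp
    have hg : HasFDerivAt (fun y : Fin 4 → ℝ => y 1 - y 0 - α * p_lp)
        (P 1 - P 0) x :=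
      ((hasFDerivAt_apply 1 x).sub (hasFDerivAt_apply 0 x)).sub_const (α * p_lp)
    -- derivative of sqrt ∘ g
    have hsq : HasFDerivAt (fun y : Fin 4 → ℝ => Real.sqrt (y 1 - y 0 - α * p_lp))
        ((1 / (2 * w)) • (P 1 - P 0)) x :=
      (Real.hasDerivAt_sqrt hs.ne').comp_hasFDerivAt x hg
    -- component 1
    set D1 : (Fin 4 → ℝ) →L[ℝ] ℝ :=
      (T_sup * x 3) • ((1 / (2 * w)) • (P 1 - P 0)) + w • (T_sup • P 3) with hD1
    have h1 : HasFDerivAt (fun y : Fin 4 → ℝ =>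
        T_sup * y 3 * Real.sqrt (y 1 - y 0 - α * p_lp)) D1 x :=
      ((hasFDerivAt_apply 3 x).const_mul T_sup).mul hsq
    -- component 2
    set D2 : (Fin 4 → ℝ) →L[ℝ] ℝ :=
      ((1/2) * T_sup * (T_sup - T_L)) • ((((2:ℕ):ℝ) * x 3 ^ (2-1)) • P 3) +
        ((T_sup * x 2) • ((1 / (2 * w)) • (P 1 - P 0)) + w • (T_sup • P 2)) with hD2
    have hpow : HasFDerivAt (fun y : Fin 4 → ℝ => (y 3) ^ 2)
        ((((2:ℕ):ℝ) * x 3 ^ (2-1)) • P 3) x :=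
      (hasDerivAt_pow 2 (x 3)).comp_hasFDerivAt (f := fun y : Fin 4 → ℝ => y 3) x (hasFDerivAt_apply 3 x)
    have h2 : HasFDerivAt (fun y : Fin 4 → ℝ =>
        (1/2) * T_sup * (T_sup - T_L) * (y 3)^2
          + T_sup * y 2 * Real.sqrt (y 1 - y 0 - α * p_lp)) D2 x :=
      (hpow.const_mul ((1/2) * T_sup * (T_sup - T_L))).add
        (((hasFDerivAt_apply 2 x).const_mul T_sup).mul hsq)
    -- the full derivative
    set L : (Fin 4 → ℝ) →L[ℝ] (Fin 3 → ℝ) :=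
      ContinuousLinearMap.pi ![P 1, D1, D2] with hL
    have hHd : HasFDerivAt H L x := by
      rw [hH]
      apply hasFDerivAt_pi''
      intro i
      fin_cases i <;>
        simp only [hL, ContinuousLinearMap.proj_pi, Matrix.cons_val_zero,
          Matrix.cons_val_one, Matrix.head_cons, Matrix.cons_val_two,
          Matrix.tail_cons, Fin.isValue]
      · exact hasFDerivAt_apply 1 x
      · exact h1
      · exact h2
    rw [hHd.fderiv]
    -- surjectivity of L
    have hwne : w ≠ 0 := hw.ne'
    have hsurj : Function.Surjective
        ((L : (Fin 4 → ℝ) →L[ℝ] (Fin 3 → ℝ)) :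
          (Fin 4 → ℝ) →ₗ[ℝ] (Fin 3 → ℝ)) := by
      intro y
      set a : ℝ := T_sup * x 3 * (1 / (2 * w)) with ha
      set b : ℝ := T_sup * x 2 * (1 / (2 * w)) with hb
      set C : ℝ := (1/2) * T_sup * (T_sup - T_L) * (((2:ℕ):ℝ) * x 3 ^ (2-1)) with hC
      refine ⟨![0, y 0, (y 2 - C * ((y 1 - a * y 0) / (T_sup * w)) - b * y 0) / (T_sup * w),
        (y 1 - a * y 0) / (T_sup * w)], ?_⟩
      funext i
      fin_cases i <;>
        simp [hL, hD1, hD2, hP, ContinuousLinearMap.pi_apply, ha, hb, hC,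
          ContinuousLinearMap.proj_apply, Matrix.cons_val_zero, Matrix.cons_val_one] <;>
        field_simp <;> ring
    have hr : LinearMap.rank ((L : (Fin 4 → ℝ) →L[ℝ] (Fin 3 → ℝ)) :
        (Fin 4 → ℝ) →ₗ[ℝ] (Fin 3 → ℝ)) = Module.rank ℝ (Fin 3 → ℝ) :=
      rank_range_of_surjective _ hsurj
    rw [hr]
    simpa using rank_fin_fun (R := ℝ) 3
  · intro hinj
    have h01 : H ![0, 0, 0, 0] = H ![1, 0, 0, 0] := by
      rw [hH]
      funext i
      fin_cases i <;> simp
    have := hinj h01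
    have h0 : (0 : ℝ) = 1 := by
      have := congrFun this 0
      simpa using this
    exact zero_ne_one h0
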